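/- (Shifted Gaussian sum expansion) Let 0 < a₁ ≤ a₂ be real numbers. There exists a constant C > 0 such that for every integer p ≥ 1, every a ∈ [a₁, a₂], every integer k ∈ ℤ, and every v ∈ ℝ, one has | ∑_{m=0}^∞ exp(−2π [ (v − m/(a√p))² + (v − (m − k)/(a√p))² ]) − ∑_{m=0}^∞ exp(−4π (v − m/(a√p))²) − (k/2) exp(−4πv²) | ≤ C · k² · p^{−1/2}. -/

import Mathlib

set_option maxHeartbeats 4000000

open Real

private lemma exp_quarter_le (h : ℝ) (i : ℕ) :
    Real.exp (-(h * i) ^ 2 / 4) ≤ Real.exp 1 * Real.exp (-(h / 4)) ^ i := by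
  rw [← Real.exp_nat_mul, ← Real.exp_add]
  apply Real.exp_le_exp.mpr
  nlinarith [sq_nonneg (h * (i : ℝ) - 2)]

private lemma geo_summable {h : ℝ} (hh : 0 < h) :
    Summable (fun n : ℕ => Real.exp 1 * Real.exp (-(h / 4)) ^ n) :=
  (summable_geometric_of_lt_one (Real.exp_pos _).le
    (Real.exp_lt_one_iff.mpr (by linarith))).mul_left _

private lemma lattice_summable {h : ℝ} (hh : 0 < h) (x : ℝ) :
    Summable (fun n : ℕ => Real.exp (-(h * ((n : ℝ) - x)) ^ 2 / 4)) := by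
  rw [← summable_nat_add_iff ⌈x⌉₊]
  refine Summable.of_nonneg_of_le (fun n => (Real.exp_pos _).le) (fun n => ?_) (geo_summable hh)
  have hx : x ≤ (⌈x⌉₊ : ℝ) := Nat.le_ceil x
  refine le_trans (Real.exp_le_exp.mpr ?_) (exp_quarter_le h n)
  push_cast
  have hn : (0:ℝ) ≤ (n:ℝ) := Nat.cast_nonneg n
  nlinarith [sq_nonneg h, mul_nonneg hn (sub_nonneg.mpr hx), sq_nonneg ((⌈x⌉₊ : ℝ) - x)]

private lemma lattice_bound {h : ℝ} (hh : 0 < h) (x : ℝ) :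
    (∑' n : ℕ, Real.exp (-(h * ((n : ℝ) - x)) ^ 2 / 4)) ≤ 2 * Real.exp 1 * (4 + h) / h := by
  set N := ⌈x⌉₊ with hN
  have hs := lattice_summable hh x
  have hgeo := geo_summable hh
  have hr1 : Real.exp (-(h / 4)) < 1 := Real.exp_lt_one_iff.mpr (by linarith)
  have hgeosum : (∑' n : ℕ, Real.exp 1 * Real.exp (-(h / 4)) ^ n)
      = Real.exp 1 * (1 - Real.exp (-(h / 4)))⁻¹ := by
    rw [tsum_mul_left, tsum_geometric_of_lt_one (Real.exp_pos _).le hr1]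
  have hinv : (1 - Real.exp (-(h / 4)))⁻¹ ≤ (4 + h) / h := by
    have hexp := Real.add_one_le_exp (h/4)
    have h1 : Real.exp (-(h/4)) ≤ 4 / (4 + h) := by
      rw [Real.exp_neg]
      have h2 : (4+h)/4 ≤ Real.exp (h/4) := by linarith
      calc (Real.exp (h/4))⁻¹ ≤ ((4+h)/4)⁻¹ := inv_anti₀ (by positivity) h2
        _ = 4/(4+h) := by rw [inv_div]
    have h2 : h / (4 + h) ≤ 1 - Real.exp (-(h/4)) := by
      have h3 : h / (4+h) = 1 - 4/(4+h) := by field_simp; ring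
      linarith
    calc (1 - Real.exp (-(h / 4)))⁻¹ ≤ (h / (4+h))⁻¹ := inv_anti₀ (by positivity) h2
      _ = (4 + h) / h := by rw [inv_div]
  have hhead : (∑ i ∈ Finset.range N, Real.exp (-(h * ((i : ℝ) - x)) ^ 2 / 4))
      ≤ Real.exp 1 * (1 - Real.exp (-(h / 4)))⁻¹ := by
    rw [← hgeosum]
    refine le_trans (Finset.sum_le_sum
        (g := fun i : ℕ => Real.exp 1 * Real.exp (-(h / 4)) ^ (N - 1 - i)) ?_) ?_
    · intro i hi
      rw [Finset.mem_range] at hi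
      have h1N : 1 ≤ N := by omega
      have hiN : i ≤ N - 1 := by omega
      have hxN : (N : ℝ) - 1 < x := by
        have hx0 : 0 < x := Nat.one_le_ceil_iff.mp h1N
        have := Nat.ceil_lt_add_one hx0.le
        push_cast at this ⊢
        rw [hN] at *
        linarith
      refine le_trans (Real.exp_le_exp.mpr ?_) (exp_quarter_le h (N - 1 - i))
      have hcast : ((N - 1 - i : ℕ) : ℝ) = (N:ℝ) - 1 - i := by
        rw [Nat.cast_sub hiN, Nat.cast_sub h1N, Nat.cast_one]
      rw [hcast]
      have hi' : (i:ℝ) ≤ (N:ℝ) - 1 := by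
        have h5 := (Nat.cast_le (α := ℝ)).mpr hiN
        rwa [Nat.cast_sub h1N, Nat.cast_one] at h5
      have key : ((N:ℝ) - 1 - i)^2 ≤ ((i:ℝ) - x)^2 := by nlinarith
      nlinarith [sq_nonneg h, key]
    · rw [Finset.sum_range_reflect (fun i => Real.exp 1 * Real.exp (-(h / 4)) ^ i) N]
      exact Summable.sum_le_tsum _ (fun i _ => by positivity) hgeo
  have htail : (∑' n : ℕ, Real.exp (-(h * (((n + N : ℕ) : ℝ) - x)) ^ 2 / 4))
      ≤ Real.exp 1 * (1 - Real.exp (-(h / 4)))⁻¹ := by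
    rw [← hgeosum]
    refine Summable.tsum_le_tsum (fun n => ?_) ((summable_nat_add_iff N).mpr hs) hgeo
    have hx : x ≤ (N : ℝ) := Nat.le_ceil x
    refine le_trans (Real.exp_le_exp.mpr ?_) (exp_quarter_le h n)
    push_cast
    nlinarith [sq_nonneg h, mul_nonneg (Nat.cast_nonneg (α := ℝ) n) (sub_nonneg.mpr hx),
      sq_nonneg ((N : ℝ) - x)]
  calc (∑' n : ℕ, Real.exp (-(h * ((n : ℝ) - x)) ^ 2 / 4))
      = (∑ i ∈ Finset.range N, Real.exp (-(h * ((i : ℝ) - x)) ^ 2 / 4))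
        + ∑' n : ℕ, Real.exp (-(h * (((n + N : ℕ) : ℝ) - x)) ^ 2 / 4) :=
        (Summable.sum_add_tsum_nat_add N hs).symm
    _ ≤ Real.exp 1 * (1 - Real.exp (-(h / 4)))⁻¹ + Real.exp 1 * (1 - Real.exp (-(h / 4)))⁻¹ :=
        add_le_add hhead htail
    _ = 2 * Real.exp 1 * (1 - Real.exp (-(h / 4)))⁻¹ := by ring
    _ ≤ 2 * Real.exp 1 * ((4 + h) / h) :=
        mul_le_mul_of_nonneg_left hinv (by positivity)
    _ = 2 * Real.exp 1 * (4 + h) / h := by ring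

private noncomputable def gg (h v t : ℝ) : ℝ := Real.exp (-(4*π) * (v - h*t)^2)
private noncomputable def gg1 (h v t : ℝ) : ℝ := 8*π*h*(v - h*t) * gg h v t
private noncomputable def gg2 (h v t : ℝ) : ℝ :=
  (64*π^2*h^2*(v - h*t)^2 - 8*π*h^2) * gg h v t

private lemma gg_pos (h v t : ℝ) : 0 < gg h v t := Real.exp_pos _

private lemma gg_hasDerivAt (h v t : ℝ) : HasDerivAt (gg h v) (gg1 h v t) t := by
  have h1 : HasDerivAt (fun t : ℝ => v - h * t) (-h) t := by
    simpa using ((hasDerivAt_id t).const_mul h).const_sub v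
  have h2 := ((h1.pow 2).const_mul (-(4*π))).exp
  exact h2.congr_deriv (by simp only [gg1, gg, Pi.pow_apply]; ring)

private lemma gg1_hasDerivAt (h v t : ℝ) : HasDerivAt (gg1 h v) (gg2 h v t) t := by
  have h1 : HasDerivAt (fun t : ℝ => 8*π*h*(v - h*t)) (8*π*h*(-h)) t := by
    have h0 : HasDerivAt (fun t : ℝ => v - h * t) (-h) t := by
      simpa using ((hasDerivAt_id t).const_mul h).const_sub v
    simpa using h0.const_mul (8*π*h)
  have h2 := h1.mul (gg_hasDerivAt h v t)
  exact h2.congr_deriv (by simp only [gg2, gg1, gg]; ring)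

private lemma abs_exp_aux (s : ℝ) : |s| * Real.exp (-(4*π) * s^2) ≤ 1 := by
  have hπ := Real.pi_gt_three
  have h1 : |s| ≤ Real.exp (s^2) := by
    have h2 : |s| ≤ s^2 + 1 := by nlinarith [sq_nonneg (|s| - 1), sq_abs s]
    exact h2.trans (by linarith [Real.add_one_le_exp (s^2)])
  have h4 : |s| * Real.exp (-(4*π) * s^2) ≤ Real.exp (s^2) * Real.exp (-(4*π) * s^2) :=
    mul_le_mul_of_nonneg_right h1 (Real.exp_pos _).le
  rw [← Real.exp_add] at h4
  refine h4.trans ?_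
  rw [show (1:ℝ) = Real.exp 0 by simp]
  apply Real.exp_le_exp.mpr
  nlinarith [sq_nonneg s]

private lemma gg1_bound (h v t : ℝ) (hh : 0 ≤ h) : |gg1 h v t| ≤ 8*π*h := by
  have habs : |gg1 h v t| = 8*π*h * (|v - h*t| * Real.exp (-(4*π) * (v - h*t)^2)) := by
    rw [gg1, gg, abs_mul, abs_mul, abs_of_nonneg (by positivity : (0:ℝ) ≤ 8*π*h),
      abs_of_pos (Real.exp_pos _)]
    ring
  rw [habs]
  calc 8*π*h * (|v - h*t| * Real.exp (-(4*π) * (v - h*t)^2)) ≤ 8*π*h * 1 :=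
        mul_le_mul_of_nonneg_left (abs_exp_aux _) (by positivity)
    _ = 8*π*h := mul_one _

private lemma exp_decay_aux (s : ℝ) : (64*π^2*s^2 + 8*π) * Real.exp (-(4*π) * s^2)
    ≤ (64*π^2 + 8*π) * Real.exp (-(s^2)/2) := by
  have hπ := Real.pi_gt_three
  have h4 : s^2 + 1 ≤ Real.exp ((-(s^2)/2) - (-(4*π) * s^2)) := by
    have h5 : s^2 + 1 ≤ Real.exp (s^2) := by linarith [Real.add_one_le_exp (s^2)]
    refine h5.trans (Real.exp_le_exp.mpr ?_)
    nlinarith [sq_nonneg s]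
  have h6 : 64*π^2*s^2 + 8*π ≤ (64*π^2 + 8*π) * Real.exp ((-(s^2)/2) - (-(4*π) * s^2)) := by
    nlinarith [sq_nonneg s, Real.pi_pos, Real.exp_pos ((-(s^2)/2) - (-(4*π) * s^2)),
      sq_nonneg (π * s)]
  calc (64*π^2*s^2 + 8*π) * Real.exp (-(4*π) * s^2)
      ≤ ((64*π^2 + 8*π) * Real.exp ((-(s^2)/2) - (-(4*π) * s^2))) * Real.exp (-(4*π) * s^2) :=
        mul_le_mul_of_nonneg_right h6 (Real.exp_pos _).le
    _ = (64*π^2 + 8*π) * Real.exp (-(s^2)/2) := by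
        rw [mul_assoc, ← Real.exp_add]; ring_nf

private lemma gg2_bound (h v t n : ℝ) (htn : |t - n| ≤ 1) :
    |gg2 h v t| ≤ h^2 * ((64*π^2 + 8*π) * Real.exp (h^2/2)) * Real.exp (-((v - h*n)^2)/4) := by
  have hπ := Real.pi_gt_three
  have h7 : (t - n)^2 ≤ 1 := by nlinarith [sq_abs (t - n), abs_nonneg (t - n)]
  have hsd : ((v - h*t) - (v - h*n))^2 ≤ h^2 := by
    have he : (v - h*t) - (v - h*n) = -(h * (t - n)) := by ring
    rw [he, neg_sq, mul_pow]
    nlinarith [sq_nonneg h]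
  have habs : |gg2 h v t| ≤ h^2 * (64*π^2*(v - h*t)^2 + 8*π) * Real.exp (-(4*π) * (v - h*t)^2) := by
    rw [gg2, gg, abs_mul, abs_of_pos (Real.exp_pos _)]
    have h8 : |64*π^2*h^2*(v - h*t)^2 - 8*π*h^2| ≤ h^2 * (64*π^2*(v - h*t)^2 + 8*π) := by
      rw [abs_le]
      constructor <;> nlinarith [sq_nonneg h, sq_nonneg (v - h*t), sq_nonneg (h*(v - h*t)), Real.pi_pos]
    exact mul_le_mul_of_nonneg_right h8 (Real.exp_pos _).le
  refine habs.trans ?_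
  have key2 : Real.exp (-((v - h*t)^2)/2) ≤ Real.exp (h^2/2) * Real.exp (-((v - h*n)^2)/4) := by
    rw [← Real.exp_add]
    apply Real.exp_le_exp.mpr
    nlinarith [sq_nonneg (2*(v - h*t) - (v - h*n))]
  calc h^2 * (64*π^2*(v - h*t)^2 + 8*π) * Real.exp (-(4*π) * (v - h*t)^2)
      ≤ h^2 * ((64*π^2 + 8*π) * Real.exp (-((v - h*t)^2)/2)) := by
        rw [mul_assoc]
        exact mul_le_mul_of_nonneg_left (exp_decay_aux _) (sq_nonneg h)
    _ ≤ h^2 * ((64*π^2 + 8*π) * (Real.exp (h^2/2) * Real.exp (-((v - h*n)^2)/4))) := by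
        refine mul_le_mul_of_nonneg_left ?_ (sq_nonneg h)
        exact mul_le_mul_of_nonneg_left key2 (by positivity)
    _ = h^2 * ((64*π^2 + 8*π) * Real.exp (h^2/2)) * Real.exp (-((v - h*n)^2)/4) := by ring

private lemma gg_lip (h v : ℝ) (hh : 0 ≤ h) (t t' : ℝ) :
    |gg h v t - gg h v t'| ≤ 8*π*h * |t - t'| := by
  have := Convex.norm_image_sub_le_of_norm_hasDerivWithin_le
    (f := gg h v) (f' := gg1 h v) (s := Set.univ) (C := 8*π*h)
    (fun x _ => (gg_hasDerivAt h v x).hasDerivWithinAt)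
    (fun x _ => by rw [Real.norm_eq_abs]; exact gg1_bound h v x hh)
    convex_univ (Set.mem_univ t') (Set.mem_univ t)
  simpa [Real.norm_eq_abs] using this

private lemma gg_second_diff (h v n : ℝ) :
    |gg h v n + gg h v (n - 1) - 2 * gg h v (n - 1/2)|
      ≤ (1/2) * (h^2 * ((64*π^2 + 8*π) * Real.exp (h^2/2)) * Real.exp (-((v - h*n)^2)/4)) := by
  have hA : ∀ t : ℝ, HasDerivAt
      (fun t : ℝ => gg h v ((n - 1/2) + t) + gg h v ((n - 1/2) - t) - 2 * gg h v (n - 1/2))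
      (gg1 h v ((n - 1/2) + t) - gg1 h v ((n - 1/2) - t)) t := by
    intro t
    have h1 : HasDerivAt (fun t : ℝ => gg h v ((n - 1/2) + t)) (gg1 h v ((n - 1/2) + t)) t := by
      simpa [Function.comp_def] using (gg_hasDerivAt h v ((n - 1/2) + t)).comp t ((hasDerivAt_id t).const_add (n - 1/2))
    have h2 : HasDerivAt (fun t : ℝ => gg h v ((n - 1/2) - t)) (-(gg1 h v ((n - 1/2) - t))) t := by
      simpa [Function.comp_def] using (gg_hasDerivAt h v ((n - 1/2) - t)).comp t ((hasDerivAt_id t).const_sub (n - 1/2))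
    have h3 := (h1.add h2).sub_const (2 * gg h v (n - 1/2))
    exact h3.congr_deriv (by ring)
  set B := h^2 * ((64*π^2 + 8*π) * Real.exp (h^2/2)) * Real.exp (-((v - h*n)^2)/4) with hB
  have hg1lip : ∀ x ∈ Set.Icc (n - 1) n, ∀ y ∈ Set.Icc (n - 1) n,
      |gg1 h v x - gg1 h v y| ≤ B * |x - y| := by
    intro x hx y hy
    have := Convex.norm_image_sub_le_of_norm_hasDerivWithin_le
      (f := gg1 h v) (f' := gg2 h v) (s := Set.Icc (n-1) n) (C := B)
      (fun z _ => (gg1_hasDerivAt h v z).hasDerivWithinAt)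
      (fun z hz => by
        rw [Real.norm_eq_abs]
        refine gg2_bound h v z n ?_
        rw [abs_le]
        constructor <;> [linarith [hz.1]; linarith [hz.2]])
      (convex_Icc _ _) hy hx
    simpa [Real.norm_eq_abs] using this
  have hderivb : ∀ t ∈ Set.Icc (0:ℝ) (1/2),
      |gg1 h v ((n - 1/2) + t) - gg1 h v ((n - 1/2) - t)| ≤ B := by
    intro t ht
    have h1 : (n - 1/2) + t ∈ Set.Icc (n - 1) n := by
      constructor <;> [linarith [ht.1]; linarith [ht.2]]
    have h2 : (n - 1/2) - t ∈ Set.Icc (n - 1) n := by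
      constructor <;> [linarith [ht.2]; linarith [ht.1]]
    refine (hg1lip _ h1 _ h2).trans ?_
    have : |(n - 1/2 + t) - (n - 1/2 - t)| = 2 * t := by
      rw [show (n - 1/2 + t) - (n - 1/2 - t) = 2 * t by ring]
      exact abs_of_nonneg (by linarith [ht.1])
    rw [this]
    have hB0 : 0 ≤ B := by positivity
    nlinarith [ht.1, ht.2]
  have hmain := Convex.norm_image_sub_le_of_norm_hasDerivWithin_le
    (f := fun t : ℝ => gg h v ((n - 1/2) + t) + gg h v ((n - 1/2) - t) - 2 * gg h v (n - 1/2))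
    (f' := fun t : ℝ => gg1 h v ((n - 1/2) + t) - gg1 h v ((n - 1/2) - t))
    (s := Set.Icc (0:ℝ) (1/2)) (C := B)
    (fun t _ => (hA t).hasDerivWithinAt)
    (fun t ht => by rw [Real.norm_eq_abs]; exact hderivb t ht)
    (convex_Icc _ _) (Set.left_mem_Icc.mpr (by norm_num)) (Set.right_mem_Icc.mpr (by norm_num))
  rw [Real.norm_eq_abs, Real.norm_eq_abs] at hmain
  rw [show (n:ℝ) - 1/2 + 0 = n - 1/2 by ring, show (n:ℝ) - 1/2 - 0 = n - 1/2 by ring,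
    show (n:ℝ) - 1/2 + 1/2 = n by ring, show (n:ℝ) - 1/2 - 1/2 = n - 1 by ring] at hmain
  have e0 : gg h v (n - 1/2) + gg h v (n - 1/2) - 2 * gg h v (n - 1/2) = 0 := by ring
  rw [e0, sub_zero] at hmain
  refine hmain.trans ?_
  rw [show |(1:ℝ)/2 - 0| = 1/2 by norm_num]
  rw [hB]; ring_nf; rfl

private lemma gg_le_env (h v c : ℝ) (hh : 0 < h) (n : ℕ) :
    gg h v ((n:ℝ) - c) ≤ Real.exp (-(h * ((n:ℝ) - (c + v/h)))^2/4) := by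
  rw [gg]
  apply Real.exp_le_exp.mpr
  have he : (v - h*((n:ℝ) - c))^2 = (h * ((n:ℝ) - (c + v/h)))^2 := by
    field_simp
    ring
  rw [he]
  nlinarith [sq_nonneg (h * ((n:ℝ) - (c + v/h))), Real.pi_gt_three]

private lemma gg_summable (h v c : ℝ) (hh : 0 < h) :
    Summable (fun n : ℕ => gg h v ((n:ℝ) - c)) :=
  Summable.of_nonneg_of_le (fun n => (gg_pos _ _ _).le) (fun n => gg_le_env h v c hh n)
    (lattice_summable hh (c + v/h))

private lemma gg_tsum_le (h v c : ℝ) (hh : 0 < h) :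
    (∑' n : ℕ, gg h v ((n:ℝ) - c)) ≤ 2 * Real.exp 1 * (4 + h) / h :=
  le_trans (Summable.tsum_le_tsum (gg_le_env h v c hh) (gg_summable h v c hh)
    (lattice_summable hh (c + v/h))) (lattice_bound hh _)

private lemma env_eq (h v : ℝ) (hh : 0 < h) (n : ℝ) :
    Real.exp (-((v - h*n)^2)/4) = Real.exp (-(h*(n - v/h))^2/4) := by
  congr 1
  field_simp
  ring

private lemma key_estimate (H : ℝ) (hH0 : 0 < H) :
    ∃ C > 0, ∀ h : ℝ, 0 < h → h ≤ H → ∀ (k : ℤ) (v : ℝ),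
      |(∑' m : ℕ, Real.exp (-2 * π * ((v - m * h)^2 + (v - ((m:ℝ) - k) * h)^2)))
        - (∑' m : ℕ, Real.exp (-4 * π * (v - m * h)^2))
        - ((k:ℝ)/2) * Real.exp (-4 * π * v^2)| ≤ C * (k:ℝ)^2 * h := by
  set CQ := 4*π + (64*π^2 + 8*π) * Real.exp (H^2/2) * Real.exp 1 * (4+H) with hCQ
  have hCQ0 : 0 < CQ := by positivity
  refine ⟨2*π*Real.exp 1*(4+H) + 16*π + CQ, by positivity, ?_⟩
  intro h hh hhH k v
  -- rewrite the three pieces in terms of `gg`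
  have hS2 : (∑' m : ℕ, Real.exp (-4 * π * (v - m * h)^2)) = ∑' n : ℕ, gg h v ((n:ℝ) - 0) :=
    tsum_congr (fun n => by rw [gg]; congr 1; ring)
  have hgg0 : Real.exp (-4*π*v^2) = gg h v 0 := by rw [gg]; congr 1; ring
  have hS1 : (∑' m : ℕ, Real.exp (-2 * π * ((v - m*h)^2 + (v - ((m:ℝ) - k)*h)^2)))
      = Real.exp (-(π * (k:ℝ)^2 * h^2)) * ∑' n : ℕ, gg h v ((n:ℝ) - (k:ℝ)/2) := by
    rw [← tsum_mul_left]
    refine tsum_congr (fun m => ?_)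
    rw [gg, ← Real.exp_add]
    congr 1
    ring
  obtain ⟨j, r, hk2, hr⟩ : ∃ j r : ℤ, k = 2*j + r ∧ (r = 0 ∨ r = 1) :=
    ⟨k/2, k%2, by omega, by omega⟩
  have hkr : (k:ℝ) = 2*(j:ℝ) + (r:ℝ) := by exact_mod_cast hk2
  have hr0 : (0:ℝ) ≤ (r:ℝ) := by rcases hr with rfl | rfl <;> norm_num
  have hr1 : (r:ℝ) ≤ 1 := by rcases hr with rfl | rfl <;> norm_num
  -- boundary estimate
  have hbd : |(∑' n : ℕ, gg h v ((n:ℝ) - (k:ℝ)/2)) - (∑' n : ℕ, gg h v ((n:ℝ) - (r:ℝ)/2))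
      - (j:ℝ) * gg h v 0| ≤ 16*π*h*(k:ℝ)^2 := by
    rcases le_or_gt 0 j with hj | hj
    · -- j ≥ 0
      set J := j.toNat with hJdef
      have hJ : ((J:ℕ):ℝ) = (j:ℝ) := by
        rw [hJdef]; exact_mod_cast Int.toNat_of_nonneg hj
      have hsplit := (Summable.sum_add_tsum_nat_add (f := fun n : ℕ => gg h v ((n:ℝ) - (k:ℝ)/2)) J
        (gg_summable h v _ hh)).symm
      have htail : (∑' n : ℕ, gg h v (((n + J : ℕ):ℝ) - (k:ℝ)/2))
          = ∑' n : ℕ, gg h v ((n:ℝ) - (r:ℝ)/2) := by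
        refine tsum_congr (fun n => ?_)
        congr 1
        push_cast
        rw [← hJ] at hkr
        push_cast at hkr
        linarith
      rw [hsplit, htail]
      have hsum_const : ((j:ℝ)) * gg h v 0 = ∑ _i ∈ Finset.range J, gg h v 0 := by
        rw [Finset.sum_const, Finset.card_range, nsmul_eq_mul, hJ]
      have e1 : (∑ i ∈ Finset.range J, gg h v ((i:ℝ) - (k:ℝ)/2))
          + (∑' n : ℕ, gg h v ((n:ℝ) - (r:ℝ)/2)) - (∑' n : ℕ, gg h v ((n:ℝ) - (r:ℝ)/2))
          - (j:ℝ) * gg h v 0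
          = ∑ i ∈ Finset.range J, (gg h v ((i:ℝ) - (k:ℝ)/2) - gg h v 0) := by
        rw [Finset.sum_sub_distrib, ← hsum_const]; ring
      rw [e1]
      refine (Finset.abs_sum_le_sum_abs _ _).trans ?_
      have hterm : ∀ i ∈ Finset.range J, |gg h v ((i:ℝ) - (k:ℝ)/2) - gg h v 0|
          ≤ 8*π*h * (2*(J:ℝ)) := by
        intro i hi
        rw [Finset.mem_range] at hi
        have hJ1 : (1:ℝ) ≤ (J:ℝ) := by exact_mod_cast Nat.one_le_iff_ne_zero.mpr (by omega)
        have hi' : (i:ℝ) + 1 ≤ (J:ℝ) := by exact_mod_cast hi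
        have hi0 : (0:ℝ) ≤ (i:ℝ) := Nat.cast_nonneg i
        refine (gg_lip h v hh.le _ _).trans ?_
        have habs : |(i:ℝ) - (k:ℝ)/2 - 0| ≤ 2*(J:ℝ) := by
          rw [sub_zero, abs_le]
          rw [← hJ] at hkr
          constructor <;> [linarith; linarith]
        exact mul_le_mul_of_nonneg_left habs (by positivity)
      refine (Finset.sum_le_sum hterm).trans ?_
      rw [Finset.sum_const, Finset.card_range, nsmul_eq_mul]
      have hJk : (J:ℝ)^2 ≤ (k:ℝ)^2 := by
        rw [← hJ] at hkr
        nlinarith [Nat.cast_nonneg (α := ℝ) J]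
      nlinarith [mul_le_mul_of_nonneg_left hJk (by positivity : (0:ℝ) ≤ 16*π*h)]
    · -- j < 0
      set J := (-j).toNat with hJdef
      have hJ : ((J:ℕ):ℝ) = -(j:ℝ) := by
        rw [hJdef]
        have h9 : ((-j).toNat : ℤ) = -j := Int.toNat_of_nonneg (by omega)
        exact_mod_cast h9
      have hJ1 : (1:ℝ) ≤ (J:ℝ) := by
        have : 1 ≤ J := by omega
        exact_mod_cast this
      have hsplit := (Summable.sum_add_tsum_nat_add (f := fun n : ℕ => gg h v ((n:ℝ) - (r:ℝ)/2)) J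
        (gg_summable h v _ hh)).symm
      have htail : (∑' n : ℕ, gg h v (((n + J : ℕ):ℝ) - (r:ℝ)/2))
          = ∑' n : ℕ, gg h v ((n:ℝ) - (k:ℝ)/2) := by
        refine tsum_congr (fun n => ?_)
        congr 1
        push_cast
        rw [show ((J:ℕ):ℝ) = -(j:ℝ) from hJ] at *
        linarith [hkr]
      rw [hsplit]
      have e1 : (∑' n : ℕ, gg h v ((n:ℝ) - (k:ℝ)/2))
          - ((∑ i ∈ Finset.range J, gg h v ((i:ℝ) - (r:ℝ)/2))
            + ∑' n : ℕ, gg h v (((n + J : ℕ):ℝ) - (r:ℝ)/2)) - (j:ℝ) * gg h v 0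
          = -(∑ i ∈ Finset.range J, (gg h v ((i:ℝ) - (r:ℝ)/2) - gg h v 0)) := by
        rw [htail, Finset.sum_sub_distrib]
        have hsum_const : (∑ _i ∈ Finset.range J, gg h v 0) = (J:ℝ) * gg h v 0 := by
          rw [Finset.sum_const, Finset.card_range, nsmul_eq_mul]
        rw [hsum_const, hJ]
        ring
      rw [e1, abs_neg]
      refine (Finset.abs_sum_le_sum_abs _ _).trans ?_
      have hterm : ∀ i ∈ Finset.range J, |gg h v ((i:ℝ) - (r:ℝ)/2) - gg h v 0|
          ≤ 8*π*h * (2*(J:ℝ)) := by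
        intro i hi
        rw [Finset.mem_range] at hi
        have hi' : (i:ℝ) + 1 ≤ (J:ℝ) := by exact_mod_cast hi
        have hi0 : (0:ℝ) ≤ (i:ℝ) := Nat.cast_nonneg i
        refine (gg_lip h v hh.le _ _).trans ?_
        have habs : |(i:ℝ) - (r:ℝ)/2 - 0| ≤ 2*(J:ℝ) := by
          rw [sub_zero, abs_le]
          constructor <;> [linarith; linarith]
        exact mul_le_mul_of_nonneg_left habs (by positivity)
      refine (Finset.sum_le_sum hterm).trans ?_
      rw [Finset.sum_const, Finset.card_range, nsmul_eq_mul]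
      have hJk : (J:ℝ)^2 ≤ (k:ℝ)^2 := by
        rw [show ((J:ℕ):ℝ) = -(j:ℝ) from hJ] at hJ1 ⊢
        nlinarith [mul_nonneg (by linarith : (0:ℝ) ≤ -(j:ℝ) - 1) (by linarith : (0:ℝ) ≤ 1 - (r:ℝ)),
          sq_nonneg ((r:ℝ) - 1), sq_nonneg ((j:ℝ) + 1)]
      nlinarith [mul_le_mul_of_nonneg_left hJk (by positivity : (0:ℝ) ≤ 16*π*h)]
  -- Q estimate (half-integer shift)
  have hQ : |(∑' n : ℕ, gg h v ((n:ℝ) - 1/2)) - (∑' n : ℕ, gg h v ((n:ℝ) - 0))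
      - 1/2 * gg h v 0| ≤ CQ * h := by
    have hsm0 := gg_summable h v 0 hh
    have hsm1 := gg_summable h v 1 hh
    have hsmh := gg_summable h v (1/2) hh
    have hF1 : (∑' n : ℕ, gg h v ((n:ℝ) - 1))
        = gg h v (((0:ℕ):ℝ) - 1) + ∑' n : ℕ, gg h v ((n:ℝ) - 0) := by
      rw [(Summable.sum_add_tsum_nat_add (f := fun n : ℕ => gg h v ((n:ℝ) - 1)) 1 hsm1).symm]
      congr 1
      · rw [Finset.sum_range_one]
      · refine tsum_congr (fun n => ?_); congr 1; push_cast; ring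
    have hsmD : Summable (fun n : ℕ =>
        gg h v ((n:ℝ) - 0) + gg h v ((n:ℝ) - 1) - 2 * gg h v ((n:ℝ) - 1/2)) :=
      (hsm0.add hsm1).sub (hsmh.mul_left 2)
    have hDD : (∑' n : ℕ, (gg h v ((n:ℝ) - 0) + gg h v ((n:ℝ) - 1) - 2 * gg h v ((n:ℝ) - 1/2)))
        = (∑' n : ℕ, gg h v ((n:ℝ) - 0)) + (∑' n : ℕ, gg h v ((n:ℝ) - 1))
          - 2 * (∑' n : ℕ, gg h v ((n:ℝ) - 1/2)) := by
      rw [Summable.tsum_sub (hsm0.add hsm1) (hsmh.mul_left 2), Summable.tsum_add hsm0 hsm1, tsum_mul_left]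
    have hb : ∀ n : ℕ, |gg h v ((n:ℝ) - 0) + gg h v ((n:ℝ) - 1) - 2 * gg h v ((n:ℝ) - 1/2)|
        ≤ (1/2) * (h^2 * ((64*π^2 + 8*π) * Real.exp (h^2/2)))
          * Real.exp (-(h*((n:ℝ) - v/h))^2/4) := by
      intro n
      calc |gg h v ((n:ℝ) - 0) + gg h v ((n:ℝ) - 1) - 2 * gg h v ((n:ℝ) - 1/2)|
          ≤ (1/2) * (h^2 * ((64*π^2 + 8*π) * Real.exp (h^2/2))
              * Real.exp (-((v - h*(n:ℝ))^2)/4)) := by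
            rw [show (n:ℝ) - 0 = (n:ℝ) from sub_zero _]
            exact gg_second_diff h v n
        _ = (1/2) * (h^2 * ((64*π^2 + 8*π) * Real.exp (h^2/2)))
              * Real.exp (-(h*((n:ℝ) - v/h))^2/4) := by
            rw [env_eq h v hh (n:ℝ)]; ring
    have henv : Summable (fun n : ℕ => (1/2) * (h^2 * ((64*π^2 + 8*π) * Real.exp (h^2/2)))
        * Real.exp (-(h*((n:ℝ) - v/h))^2/4)) := by
      exact (lattice_summable hh (v/h)).mul_left _
    have habssm : Summable (fun n : ℕ =>
        |gg h v ((n:ℝ) - 0) + gg h v ((n:ℝ) - 1) - 2 * gg h v ((n:ℝ) - 1/2)|) :=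
      Summable.of_nonneg_of_le (fun n => abs_nonneg _) hb henv
    have hDDb : |∑' n : ℕ, (gg h v ((n:ℝ) - 0) + gg h v ((n:ℝ) - 1) - 2 * gg h v ((n:ℝ) - 1/2))|
        ≤ (1/2) * (h^2 * ((64*π^2 + 8*π) * Real.exp (h^2/2))) * (2 * Real.exp 1 * (4 + h)/h) := by
      calc |∑' n : ℕ, (gg h v ((n:ℝ) - 0) + gg h v ((n:ℝ) - 1) - 2 * gg h v ((n:ℝ) - 1/2))|
          ≤ ∑' n : ℕ, |gg h v ((n:ℝ) - 0) + gg h v ((n:ℝ) - 1) - 2 * gg h v ((n:ℝ) - 1/2)| := by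
            have hn := norm_tsum_le_tsum_norm (f := fun n : ℕ =>
              gg h v ((n:ℝ) - 0) + gg h v ((n:ℝ) - 1) - 2 * gg h v ((n:ℝ) - 1/2))
              (by simpa [Real.norm_eq_abs] using habssm)
            simpa [Real.norm_eq_abs] using hn
        _ ≤ ∑' n : ℕ, ((1/2) * (h^2 * ((64*π^2 + 8*π) * Real.exp (h^2/2)))
              * Real.exp (-(h*((n:ℝ) - v/h))^2/4)) := Summable.tsum_le_tsum hb habssm henv
        _ = (1/2) * (h^2 * ((64*π^2 + 8*π) * Real.exp (h^2/2)))
              * ∑' n : ℕ, Real.exp (-(h*((n:ℝ) - v/h))^2/4) := tsum_mul_left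
        _ ≤ (1/2) * (h^2 * ((64*π^2 + 8*π) * Real.exp (h^2/2))) * (2 * Real.exp 1 * (4 + h)/h) :=
            mul_le_mul_of_nonneg_left (lattice_bound hh (v/h)) (by positivity)
    have hlip : |gg h v (((0:ℕ):ℝ) - 1) - gg h v 0| ≤ 8*π*h := by
      have := gg_lip h v hh.le (((0:ℕ):ℝ) - 1) 0
      rw [show ((0:ℕ):ℝ) - 1 - 0 = -1 by norm_num] at this
      simpa using this
    have hid : 2 * ((∑' n : ℕ, gg h v ((n:ℝ) - 1/2)) - (∑' n : ℕ, gg h v ((n:ℝ) - 0))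
          - 1/2 * gg h v 0)
        = -(∑' n : ℕ, (gg h v ((n:ℝ) - 0) + gg h v ((n:ℝ) - 1) - 2 * gg h v ((n:ℝ) - 1/2)))
          + (gg h v (((0:ℕ):ℝ) - 1) - gg h v 0) := by
      rw [hDD, hF1]; ring
    have habs2 : 2 * |(∑' n : ℕ, gg h v ((n:ℝ) - 1/2)) - (∑' n : ℕ, gg h v ((n:ℝ) - 0))
          - 1/2 * gg h v 0|
        ≤ (1/2) * (h^2 * ((64*π^2 + 8*π) * Real.exp (h^2/2))) * (2 * Real.exp 1 * (4 + h)/h)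
          + 8*π*h := by
      have h2 : |2 * ((∑' n : ℕ, gg h v ((n:ℝ) - 1/2)) - (∑' n : ℕ, gg h v ((n:ℝ) - 0))
          - 1/2 * gg h v 0)|
          ≤ (1/2) * (h^2 * ((64*π^2 + 8*π) * Real.exp (h^2/2))) * (2 * Real.exp 1 * (4 + h)/h)
            + 8*π*h := by
        rw [hid]
        exact (abs_add_le _ _).trans (add_le_add (by rw [abs_neg]; exact hDDb) hlip)
      rwa [abs_mul, abs_of_nonneg (by norm_num : (0:ℝ) ≤ 2)] at h2
    have hD1eq : (1/2) * (h^2 * ((64*π^2 + 8*π) * Real.exp (h^2/2))) * (2 * Real.exp 1 * (4 + h)/h)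
        = ((64*π^2 + 8*π) * Real.exp (h^2/2)) * Real.exp 1 * (4 + h) * h := by
      field_simp
    rw [hD1eq] at habs2
    have hmono : ((64*π^2 + 8*π) * Real.exp (h^2/2)) * Real.exp 1 * (4 + h)
        ≤ ((64*π^2 + 8*π) * Real.exp (H^2/2)) * Real.exp 1 * (4 + H) := by
      have h2 : Real.exp (h^2/2) ≤ Real.exp (H^2/2) := Real.exp_le_exp.mpr (by nlinarith)
      apply mul_le_mul _ (by linarith) (by linarith) (by positivity)
      exact mul_le_mul_of_nonneg_right (mul_le_mul_of_nonneg_left h2 (by positivity))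
        (Real.exp_pos 1).le
    rw [hCQ]
    nlinarith [mul_le_mul_of_nonneg_right hmono hh.le, Real.pi_pos,
      mul_nonneg (by positivity : (0:ℝ) ≤ (64*π^2 + 8*π) * Real.exp (H^2/2) * Real.exp 1 * (4+H)) hh.le]
  -- assembly
  rw [hS1, hS2, hgg0]
  have hTle := gg_tsum_le h v ((k:ℝ)/2) hh
  have hTnn : (0:ℝ) ≤ ∑' n : ℕ, gg h v ((n:ℝ) - (k:ℝ)/2) :=
    tsum_nonneg (fun n => (gg_pos _ _ _).le)
  have hexp1 : |Real.exp (-(π*(k:ℝ)^2*h^2)) - 1| ≤ π*(k:ℝ)^2*h^2 := by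
    have hc0 : (0:ℝ) ≤ π*(k:ℝ)^2*h^2 := by positivity
    have hle1 : Real.exp (-(π*(k:ℝ)^2*h^2)) ≤ 1 := by
      rw [show (1:ℝ) = Real.exp 0 by simp]
      exact Real.exp_le_exp.mpr (by linarith)
    rw [abs_le]
    constructor
    · linarith [Real.add_one_le_exp (-(π*(k:ℝ)^2*h^2))]
    · linarith
  have hAterm : |(Real.exp (-(π*(k:ℝ)^2*h^2)) - 1) * (∑' n : ℕ, gg h v ((n:ℝ) - (k:ℝ)/2))|
      ≤ 2*π*Real.exp 1*(4+H)*((k:ℝ)^2*h) := by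
    rw [abs_mul, abs_of_nonneg hTnn]
    calc |Real.exp (-(π*(k:ℝ)^2*h^2)) - 1| * (∑' n : ℕ, gg h v ((n:ℝ) - (k:ℝ)/2))
        ≤ (π*(k:ℝ)^2*h^2) * (2 * Real.exp 1 * (4 + h)/h) :=
          mul_le_mul hexp1 hTle hTnn (by positivity)
      _ = 2*π*Real.exp 1*(4+h)*((k:ℝ)^2*h) := by field_simp
      _ ≤ 2*π*Real.exp 1*(4+H)*((k:ℝ)^2*h) := by gcongr <;> positivity
  have hdec : Real.exp (-(π*(k:ℝ)^2*h^2)) * (∑' n : ℕ, gg h v ((n:ℝ) - (k:ℝ)/2))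
        - (∑' n : ℕ, gg h v ((n:ℝ) - 0)) - (k:ℝ)/2 * gg h v 0
      = (Real.exp (-(π*(k:ℝ)^2*h^2)) - 1) * (∑' n : ℕ, gg h v ((n:ℝ) - (k:ℝ)/2))
        + ((∑' n : ℕ, gg h v ((n:ℝ) - (k:ℝ)/2)) - (∑' n : ℕ, gg h v ((n:ℝ) - (r:ℝ)/2))
          - (j:ℝ) * gg h v 0)
        + ((∑' n : ℕ, gg h v ((n:ℝ) - (r:ℝ)/2)) - (∑' n : ℕ, gg h v ((n:ℝ) - 0))
          - (r:ℝ)/2 * gg h v 0) := by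
    linear_combination (-(gg h v 0)/2) * hkr
  rw [hdec]
  have hZ : |(∑' n : ℕ, gg h v ((n:ℝ) - (r:ℝ)/2)) - (∑' n : ℕ, gg h v ((n:ℝ) - 0))
      - (r:ℝ)/2 * gg h v 0| ≤ CQ * ((k:ℝ)^2*h) := by
    rcases hr with rfl | rfl
    · simp only [Int.cast_zero, zero_div, zero_mul, sub_zero, sub_self, abs_zero]
      positivity
    · have hk1 : (1:ℝ) ≤ (k:ℝ)^2 := by
        have hk0 : k ≠ 0 := by omega
        have h1 : 1 ≤ k^2 := by rcases hk0.lt_or_gt with h|h <;> nlinarith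
        exact_mod_cast h1
      have := hQ
      simp only [Int.cast_one] at *
      calc |(∑' n : ℕ, gg h v ((n:ℝ) - 1/2)) - (∑' n : ℕ, gg h v ((n:ℝ) - 0))
          - 1/2 * gg h v 0| ≤ CQ * h := this
        _ ≤ CQ * ((k:ℝ)^2*h) := by nlinarith [mul_le_mul_of_nonneg_left hk1 hCQ0.le]
  calc |(Real.exp (-(π*(k:ℝ)^2*h^2)) - 1) * (∑' n : ℕ, gg h v ((n:ℝ) - (k:ℝ)/2))
        + ((∑' n : ℕ, gg h v ((n:ℝ) - (k:ℝ)/2)) - (∑' n : ℕ, gg h v ((n:ℝ) - (r:ℝ)/2))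
          - (j:ℝ) * gg h v 0)
        + ((∑' n : ℕ, gg h v ((n:ℝ) - (r:ℝ)/2)) - (∑' n : ℕ, gg h v ((n:ℝ) - 0))
          - (r:ℝ)/2 * gg h v 0)|
      ≤ |(Real.exp (-(π*(k:ℝ)^2*h^2)) - 1) * (∑' n : ℕ, gg h v ((n:ℝ) - (k:ℝ)/2))|
        + |(∑' n : ℕ, gg h v ((n:ℝ) - (k:ℝ)/2)) - (∑' n : ℕ, gg h v ((n:ℝ) - (r:ℝ)/2))
          - (j:ℝ) * gg h v 0|
        + |(∑' n : ℕ, gg h v ((n:ℝ) - (r:ℝ)/2)) - (∑' n : ℕ, gg h v ((n:ℝ) - 0))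
          - (r:ℝ)/2 * gg h v 0| :=
        (abs_add_le _ _).trans (add_le_add_left (abs_add_le _ _) _)
    _ ≤ 2*π*Real.exp 1*(4+H)*((k:ℝ)^2*h) + 16*π*h*(k:ℝ)^2 + CQ * ((k:ℝ)^2*h) :=
        add_le_add (add_le_add hAterm hbd) hZ
    _ = (2*π*Real.exp 1*(4+H) + 16*π + CQ) * (k:ℝ)^2 * h := by ring

/-- Shifted Gaussian sum expansion, uniform in `k ∈ ℤ`, `v ∈ ℝ` and
`a ∈ [a₁, a₂] ⊂ (0, ∞)`. -/
theorem shifted_gaussian_sum_expansion (a₁ a₂ : ℝ) (ha₁ : 0 < a₁) (ha : a₁ ≤ a₂) :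
    ∃ C > 0, ∀ p : ℕ, 1 ≤ p → ∀ a ∈ Set.Icc a₁ a₂, ∀ k : ℤ, ∀ v : ℝ,
      |(∑' m : ℕ, Real.exp (-2 * Real.pi *
            ((v - m / (a * Real.sqrt p)) ^ 2 + (v - (m - k) / (a * Real.sqrt p)) ^ 2))) -
          (∑' m : ℕ, Real.exp (-4 * Real.pi * (v - m / (a * Real.sqrt p)) ^ 2)) -
          ((k : ℝ) / 2) * Real.exp (-4 * Real.pi * v ^ 2)| ≤
        C * (k : ℝ) ^ 2 * (p : ℝ) ^ (-(1 : ℝ) / 2) := by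
  obtain ⟨C, hC0, hC⟩ := key_estimate (1/a₁) (by positivity)
  refine ⟨C / a₁, by positivity, ?_⟩
  intro p hp a ha' k v
  obtain ⟨ha1, ha2⟩ := ha'
  have ha0 : 0 < a := lt_of_lt_of_le ha₁ ha1
  have hp1 : (1:ℝ) ≤ Real.sqrt p := by
    rw [show (1:ℝ) = Real.sqrt 1 by simp]
    exact Real.sqrt_le_sqrt (by exact_mod_cast hp)
  have hsp : 0 < Real.sqrt p := by linarith
  set h := (a * Real.sqrt p)⁻¹ with hdef
  have hh : 0 < h := by rw [hdef]; positivity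
  have hhH : h ≤ 1/a₁ := by
    rw [hdef, one_div]
    exact inv_anti₀ ha₁ (by nlinarith)
  have hkey := hC h hh hhH k v
  have e1 : (∑' m : ℕ, Real.exp (-2 * Real.pi *
        ((v - m / (a * Real.sqrt p)) ^ 2 + (v - ((m:ℝ) - k) / (a * Real.sqrt p)) ^ 2)))
      = ∑' m : ℕ, Real.exp (-2 * π * ((v - m * h)^2 + (v - ((m:ℝ) - k) * h)^2)) :=
    tsum_congr (fun m => by rw [div_eq_mul_inv, div_eq_mul_inv, ← hdef])
  have e2 : (∑' m : ℕ, Real.exp (-4 * Real.pi * (v - m / (a * Real.sqrt p)) ^ 2))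
      = ∑' m : ℕ, Real.exp (-4 * π * (v - m * h)^2) :=
    tsum_congr (fun m => by rw [div_eq_mul_inv, ← hdef])
  rw [e1, e2]
  refine hkey.trans ?_
  have hrpow : (p:ℝ)^(-(1:ℝ)/2) = (Real.sqrt p)⁻¹ := by
    rw [Real.sqrt_eq_rpow, ← Real.rpow_neg (Nat.cast_nonneg p)]
    norm_num
  rw [hrpow]
  have hhle : h ≤ a₁⁻¹ * (Real.sqrt p)⁻¹ := by
    rw [hdef, mul_inv]
    exact mul_le_mul_of_nonneg_right (inv_anti₀ ha₁ ha1) (by positivity)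
  calc C * (k:ℝ)^2 * h ≤ C * (k:ℝ)^2 * (a₁⁻¹ * (Real.sqrt p)⁻¹) :=
        mul_le_mul_of_nonneg_left hhle (by positivity)
    _ = C / a₁ * (k:ℝ)^2 * (Real.sqrt p)⁻¹ := by
        rw [div_eq_mul_inv]; ring
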